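/- arXiv:1602.01716 — 3 statements merged into one kernel-verified Lean document; each statement's English description precedes it below -/
import Mathlib

section
/- Fix t ∈ ℝ, y ∈ E and h > 0. Let H̃ be a linear map on E with ‖id − (∇²_y F(t,y)) ∘ H̃‖ ≤ ε, and define the predicted point ŷ := y − h·H̃(∂_t ∇_y F(t,y)). Then ‖ŷ − y*(t+h)‖ ≤ σ·‖y − y*(t)‖ + h·(C0/m)·ε + h²·Δ, where σ = 1 + h(C0C1/m² + C2/m) and Δ = C0²C1/(2m³) + C0C2/m² + C3/(2m). -/
open scoped InnerProductSpace

local notation "E" n => EuclideanSpace ℝ (Fin n)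

set_option maxHeartbeats 1000000 in
set_option synthInstance.maxHeartbeats 100000 in
/-- one-step prediction error bound. If H̃ approximates the
Hessian inverse at (t, y) with relative error ε, then the predicted point
ŷ = y − h·H̃(∂ₜ∇F(t,y)) satisfies
‖ŷ − y*(t+h)‖ ≤ σ‖y − y*(t)‖ + h(C0/m)ε + h²Δ. -/
theorem stmt_16 {n : ℕ} (hn : 1 ≤ n)
    (F : ℝ → (E n) → ℝ)
    (Fgrad : ℝ → (E n) → (E n))
    (Hess : ℝ → (E n) → (E n) →L[ℝ] (E n))
    (Gt Gtt : ℝ → (E n) → (E n))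
    (m L' C0 C1 C2 C3 : ℝ)
    (hm : 0 < m) (hmL : m ≤ L')
    (hC0 : 0 ≤ C0) (hC1 : 0 ≤ C1) (hC2 : 0 ≤ C2) (hC3 : 0 ≤ C3)
    (hF2 : ∀ t, ContDiff ℝ 2 (F t))
    (hG1 : ContDiff ℝ 1 (Function.uncurry Fgrad))
    (hgrad : ∀ t y, HasGradientAt (F t) (Fgrad t y) y)
    (hhess : ∀ t y, HasFDerivAt (Fgrad t) (Hess t y) y)
    (ht : ∀ t y, HasDerivAt (fun s => Fgrad s y) (Gt t y) t)
    (htt : ∀ t y, HasDerivAt (fun s => Gt s y) (Gtt t y) t)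
    (hstrong : ∀ t y (v : E n), m * ‖v‖ ^ 2 ≤ ⟪Hess t y v, v⟫_ℝ)
    (hsmooth : ∀ t y (v : E n), ⟪Hess t y v, v⟫_ℝ ≤ L' * ‖v‖ ^ 2)
    (hC0b : ∀ t y, ‖Gt t y‖ ≤ C0)
    (hC1b : ∀ t y y', ‖Hess t y - Hess t y'‖ ≤ C1 * ‖y - y'‖)
    (hC2b : ∀ t y y', ‖Gt t y - Gt t y'‖ ≤ C2 * ‖y - y'‖)
    (hC3b : ∀ t y, ‖Gtt t y‖ ≤ C3)
    (ystar : ℝ → E n)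
    (hmin : ∀ t, IsMinOn (F t) Set.univ (ystar t))
    (h ε Δ σ : ℝ) (hh : 0 < h) (hε : 0 ≤ ε)
    (hΔ : Δ = C0 ^ 2 * C1 / (2 * m ^ 3) + C0 * C2 / m ^ 2 + C3 / (2 * m))
    (hσ : σ = 1 + h * (C0 * C1 / m ^ 2 + C2 / m)) :
    ∀ (t : ℝ) (y : E n) (Htil : (E n) →L[ℝ] (E n)),
      ‖ContinuousLinearMap.id ℝ (E n) - (Hess t y).comp Htil‖ ≤ ε →
        ‖(y - h • Htil (Gt t y)) - ystar (t + h)‖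
          ≤ σ * ‖y - ystar t‖ + h * (C0 / m) * ε + h ^ 2 * Δ := by
  intro t y Htil hH
  -- continuity in time
  have hGt_cont : ∀ z : E n, Continuous fun s => Gt s z := by
    intro z
    have hdiff : Differentiable ℝ fun s => Gt s z := fun s => (htt s z).differentiableAt
    exact hdiff.continuous
  -- gradient vanishes at minimizer
  have hzero : ∀ s, Fgrad s (ystar s) = 0 := by
    intro s
    have h1 : IsLocalMin (F s) (ystar s) := (hmin s).isLocalMin Filter.univ_mem
    have h2 := h1.hasFDerivAt_eq_zero (hgrad s (ystar s)).hasFDerivAt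
    have h3 := congrArg (InnerProductSpace.toDual ℝ (EuclideanSpace ℝ (Fin n))).symm h2
    simpa using h3
  -- strong monotonicity of the gradient map
  have mono : ∀ s (a b : E n), m * ‖a - b‖ ≤ ‖Fgrad s a - Fgrad s b‖ := by
    intro s a b
    rcases eq_or_ne a b with rfl | hne
    · simp
    set u := a - b with hu
    have hupos : (0:ℝ) < ‖u‖ := norm_pos_iff.mpr (sub_ne_zero.mpr hne)
    have key : m * ‖u‖ ^ 2 ≤ ⟪Fgrad s a - Fgrad s b, u⟫_ℝ := by
      set φ : ℝ → ℝ := fun r => ⟪Fgrad s (b + r • u), u⟫_ℝ - r * (m * ‖u‖ ^ 2) with hφ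
      have hder : ∀ r : ℝ,
          HasDerivAt φ (⟪Hess s (b + r • u) u, u⟫_ℝ - m * ‖u‖ ^ 2) r := by
        intro r
        have hpath : HasDerivAt (fun r : ℝ => b + r • u) u r := by
          simpa using ((hasDerivAt_id r).smul_const u).const_add b
        have h1 : HasDerivAt (fun r : ℝ => Fgrad s (b + r • u))
            (Hess s (b + r • u) u) r :=
          (hhess s (b + r • u)).comp_hasDerivAt r hpath
        have h2 : HasDerivAt (fun r : ℝ => ⟪Fgrad s (b + r • u), u⟫_ℝ)
            (⟪Hess s (b + r • u) u, u⟫_ℝ) r := by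
          simpa using h1.inner ℝ (hasDerivAt_const r u)
        have h3 : HasDerivAt (fun r : ℝ => r * (m * ‖u‖ ^ 2)) (m * ‖u‖ ^ 2) r := by
          simpa using (hasDerivAt_id r).mul_const (m * ‖u‖ ^ 2)
        exact h2.sub h3
      have hmono : Monotone φ :=
        monotone_of_deriv_nonneg (fun r => (hder r).differentiableAt)
          (fun r => by
            rw [(hder r).deriv]
            have := hstrong s (b + r • u) u
            linarith)
      have h01 := hmono (by norm_num : (0:ℝ) ≤ 1)
      have e0 : φ 0 = ⟪Fgrad s b, u⟫_ℝ := by simp [hφ]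
      have e1 : φ 1 = ⟪Fgrad s a, u⟫_ℝ - m * ‖u‖ ^ 2 := by
        have hba : b + (1:ℝ) • u = a := by rw [hu, one_smul]; abel
        simp only [hφ, hba, one_mul]
      rw [e0, e1] at h01
      rw [inner_sub_left]
      linarith
    have hcs : ⟪Fgrad s a - Fgrad s b, u⟫_ℝ ≤ ‖Fgrad s a - Fgrad s b‖ * ‖u‖ :=
      real_inner_le_norm _ _
    have : m * ‖u‖ * ‖u‖ ≤ ‖Fgrad s a - Fgrad s b‖ * ‖u‖ := by
      nlinarith
    exact le_of_mul_le_mul_right this hupos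
  -- lower bound for the Hessian
  have hHlow : ∀ s (z v : E n), m * ‖v‖ ≤ ‖Hess s z v‖ := by
    intro s z v
    rcases eq_or_ne v 0 with rfl | hv
    · simp
    have hvpos : (0:ℝ) < ‖v‖ := norm_pos_iff.mpr hv
    have h1 := hstrong s z v
    have h2 : ⟪Hess s z v, v⟫_ℝ ≤ ‖Hess s z v‖ * ‖v‖ := real_inner_le_norm _ _
    have : m * ‖v‖ * ‖v‖ ≤ ‖Hess s z v‖ * ‖v‖ := by nlinarith
    exact le_of_mul_le_mul_right this hvpos
  -- surjectivity of the Hessian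
  have hsurj : ∀ s (z u : E n), ∃ v, Hess s z v = u := by
    intro s z u
    have hinj : Function.Injective (Hess s z) := by
      intro a b hab
      have h1 := hHlow s z (a - b)
      rw [map_sub, hab, sub_self, norm_zero] at h1
      have : ‖a - b‖ ≤ 0 := by
        nlinarith [norm_nonneg (a - b)]
      have : a - b = 0 := norm_le_zero_iff.mp this
      exact sub_eq_zero.mp this
    have hs : Function.Surjective (Hess s z).toLinearMap :=
      LinearMap.injective_iff_surjective.mp hinj
    exact hs u
  -- time-Lipschitz bound for Gt
  have hGtLip : ∀ (z : E n) (a b : ℝ), ‖Gt b z - Gt a z‖ ≤ C3 * ‖b - a‖ :=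
    fun z a b =>
      Convex.norm_image_sub_le_of_norm_hasDerivWithin_le
        (fun x _ => (htt x z).hasDerivWithinAt) (fun x _ => hC3b x z) convex_univ
        (Set.mem_univ a) (Set.mem_univ b)
  -- fundamental theorem of calculus in time
  have hFTCt : ∀ (z : E n) (a b : ℝ),
      Fgrad b z - Fgrad a z = ∫ s in a..b, Gt s z := by
    intro z a b
    exact (intervalIntegral.integral_eq_sub_of_hasDerivAt (fun s _ => ht s z)
      ((hGt_cont z).intervalIntegrable a b)).symm
  -- time Taylor bound
  have hT1 : ∀ z : E n, ‖Fgrad (t + h) z - Fgrad t z - h • Gt t z‖ ≤ C3 * h ^ 2 / 2 := by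
    intro z
    have e1 : Fgrad (t + h) z - Fgrad t z = ∫ s in t..(t + h), Gt s z := hFTCt z t (t + h)
    have e2 : h • Gt t z = ∫ _ in t..(t + h), Gt t z := by
      rw [intervalIntegral.integral_const]
      congr 1
      ring
    rw [e1, e2, ← intervalIntegral.integral_sub ((hGt_cont z).intervalIntegrable _ _)
      intervalIntegrable_const]
    have hbound : ∀ᵐ s ∂(MeasureTheory.volume.restrict (Set.uIoc t (t + h))),
        ‖Gt s z - Gt t z‖ ≤ C3 * (s - t) := by
      refine MeasureTheory.ae_restrict_of_forall_mem measurableSet_uIoc ?_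
      intro s hs
      rw [Set.uIoc_of_le (by linarith : t ≤ t + h)] at hs
      have := hGtLip z t s
      have habs : ‖s - t‖ = s - t := by
        rw [Real.norm_eq_abs, abs_of_nonneg]
        linarith [hs.1]
      rw [habs] at this
      exact this
    have hint : IntervalIntegrable (fun s => C3 * (s - t)) MeasureTheory.volume t (t + h) := by
      exact (continuous_const.mul (continuous_id.sub continuous_const)).intervalIntegrable _ _
    have := intervalIntegral.norm_integral_le_abs_of_norm_le hbound hint
    refine this.trans ?_
    have e3 : (∫ s in t..(t + h), C3 * (s - t)) = C3 * h ^ 2 / 2 := by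
      rw [intervalIntegral.integral_const_mul]
      have : (∫ s in t..(t + h), (s - t)) = ∫ s in (t - t)..(t + h - t), s :=
        intervalIntegral.integral_comp_sub_right (fun x => x) t
      rw [this]
      rw [integral_id]
      ring
    rw [e3, abs_of_nonneg (by positivity)]
  -- space Taylor bound at fixed time
  have hS1 : ∀ (s : ℝ) (z w : E n),
      ‖Fgrad s (z + w) - Fgrad s z - Hess s z w‖ ≤ C1 * ‖w‖ ^ 2 / 2 := by
    intro s z w
    have hpath : ∀ r : ℝ, HasDerivAt (fun r : ℝ => Fgrad s (z + r • w))
        (Hess s (z + r • w) w) r := by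
      intro r
      have hp : HasDerivAt (fun r : ℝ => z + r • w) w r := by
        simpa using ((hasDerivAt_id r).smul_const w).const_add z
      exact (hhess s (z + r • w)).comp_hasDerivAt r hp
    have hcont : Continuous fun r : ℝ => Hess s (z + r • w) w := by
      rcases eq_or_ne w 0 with rfl | hw
      · simp [continuous_const]
      have hlip : LipschitzWith (C1 * ‖w‖ ^ 2).toNNReal
          (fun r : ℝ => Hess s (z + r • w) w) := by
        apply LipschitzWith.of_dist_le_mul
        intro a b
        rw [dist_eq_norm, dist_eq_norm]
        have h1 : Hess s (z + a • w) w - Hess s (z + b • w) w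
            = (Hess s (z + a • w) - Hess s (z + b • w)) w := by
          simp [ContinuousLinearMap.sub_apply]
        have h2 : ‖(Hess s (z + a • w) - Hess s (z + b • w)) w‖
            ≤ ‖Hess s (z + a • w) - Hess s (z + b • w)‖ * ‖w‖ :=
          ContinuousLinearMap.le_opNorm _ _
        have h3 := hC1b s (z + a • w) (z + b • w)
        have h4 : (z + a • w) - (z + b • w) = (a - b) • w := by
          rw [sub_smul]; abel
        rw [h4, norm_smul, Real.norm_eq_abs] at h3
        have h5 : ‖Hess s (z + a • w) w - Hess s (z + b • w) w‖
            ≤ C1 * ‖w‖ ^ 2 * |a - b| := by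
          rw [h1]
          calc ‖(Hess s (z + a • w) - Hess s (z + b • w)) w‖
              ≤ ‖Hess s (z + a • w) - Hess s (z + b • w)‖ * ‖w‖ := h2
            _ ≤ (C1 * (|a - b| * ‖w‖)) * ‖w‖ := by
                apply mul_le_mul_of_nonneg_right h3 (norm_nonneg w)
            _ = C1 * ‖w‖ ^ 2 * |a - b| := by ring
        refine h5.trans ?_
        rw [Real.coe_toNNReal _ (by positivity)]
        rw [Real.norm_eq_abs]
      exact hlip.continuous
    have e1 : Fgrad s (z + w) - Fgrad s z = ∫ r in (0:ℝ)..1, Hess s (z + r • w) w := by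
      have := intervalIntegral.integral_eq_sub_of_hasDerivAt
        (f := fun r : ℝ => Fgrad s (z + r • w)) (fun r _ => hpath r)
        (hcont.intervalIntegrable 0 1)
      rw [this]
      norm_num
    have e2 : (Hess s z) w = ∫ _ in (0:ℝ)..1, (Hess s z) w := by
      rw [intervalIntegral.integral_const]; norm_num
    rw [e1, e2, ← intervalIntegral.integral_sub (hcont.intervalIntegrable _ _)
      intervalIntegrable_const]
    have hbound : ∀ᵐ r ∂(MeasureTheory.volume.restrict (Set.uIoc (0:ℝ) 1)),
        ‖Hess s (z + r • w) w - Hess s z w‖ ≤ C1 * ‖w‖ ^ 2 * r := by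
      refine MeasureTheory.ae_restrict_of_forall_mem measurableSet_uIoc ?_
      intro r hr
      rw [Set.uIoc_of_le (by norm_num : (0:ℝ) ≤ 1)] at hr
      have h1 : Hess s (z + r • w) w - Hess s z w = (Hess s (z + r • w) - Hess s z) w := by
        simp [ContinuousLinearMap.sub_apply]
      have h2 : ‖(Hess s (z + r • w) - Hess s z) w‖
          ≤ ‖Hess s (z + r • w) - Hess s z‖ * ‖w‖ := ContinuousLinearMap.le_opNorm _ _
      have h3 := hC1b s (z + r • w) z
      have h4 : (z + r • w) - z = r • w := by abel
      rw [h4, norm_smul, Real.norm_eq_abs, abs_of_nonneg hr.1.le] at h3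
      rw [h1]
      calc ‖(Hess s (z + r • w) - Hess s z) w‖
          ≤ ‖Hess s (z + r • w) - Hess s z‖ * ‖w‖ := h2
        _ ≤ (C1 * (r * ‖w‖)) * ‖w‖ := mul_le_mul_of_nonneg_right h3 (norm_nonneg w)
        _ = C1 * ‖w‖ ^ 2 * r := by ring
    have hint : IntervalIntegrable (fun r => C1 * ‖w‖ ^ 2 * r) MeasureTheory.volume 0 1 :=
      (continuous_const.mul continuous_id).intervalIntegrable _ _
    have := intervalIntegral.norm_integral_le_abs_of_norm_le hbound hint
    refine this.trans ?_
    have e3 : (∫ r in (0:ℝ)..1, C1 * ‖w‖ ^ 2 * r) = C1 * ‖w‖ ^ 2 / 2 := by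
      rw [intervalIntegral.integral_const_mul, integral_id]
      ring
    rw [e3, abs_of_nonneg (by positivity)]
  -- Hessian time-variation bound
  have hS2 : ∀ (z : E n) (a b : ℝ), ‖Hess b z - Hess a z‖ ≤ C2 * |b - a| := by
    intro z a b
    have hf : HasFDerivAt (fun x => Fgrad b x - Fgrad a x) (Hess b z - Hess a z) z :=
      (hhess b z).sub (hhess a z)
    apply hf.le_of_lip' (by positivity)
    filter_upwards with x
    have e : (Fgrad b x - Fgrad a x) - (Fgrad b z - Fgrad a z)
        = ∫ s in a..b, (Gt s x - Gt s z) := by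
      rw [intervalIntegral.integral_sub ((hGt_cont x).intervalIntegrable _ _)
        ((hGt_cont z).intervalIntegrable _ _), ← hFTCt x a b, ← hFTCt z a b]
    rw [e]
    have := intervalIntegral.norm_integral_le_of_norm_le_const
      (C := C2 * ‖x - z‖) (f := fun s => Gt s x - Gt s z) (a := a) (b := b)
      (fun s _ => hC2b s x z)
    calc ‖∫ s in a..b, (Gt s x - Gt s z)‖ ≤ C2 * ‖x - z‖ * |b - a| := this
      _ = C2 * |b - a| * ‖x - z‖ := by ring
  -- combined second-order expansion
  have hEXP : ∀ (z w : E n),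
      ‖Fgrad (t + h) (z + w) - Fgrad t z - h • Gt t z - Hess t z w‖
        ≤ C3 * h ^ 2 / 2 + C2 * h * ‖w‖ + C1 * ‖w‖ ^ 2 / 2 := by
    intro z w
    have d1 := hS1 (t + h) z w
    have d2 := hT1 z
    have d3 : ‖(Hess (t + h) z - Hess t z) w‖ ≤ C2 * h * ‖w‖ := by
      calc ‖(Hess (t + h) z - Hess t z) w‖
          ≤ ‖Hess (t + h) z - Hess t z‖ * ‖w‖ := ContinuousLinearMap.le_opNorm _ _
        _ ≤ (C2 * |t + h - t|) * ‖w‖ :=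
            mul_le_mul_of_nonneg_right (hS2 z t (t + h)) (norm_nonneg w)
        _ = C2 * h * ‖w‖ := by
            rw [show t + h - t = h by ring, abs_of_pos hh]
    have hdecomp : Fgrad (t + h) (z + w) - Fgrad t z - h • Gt t z - Hess t z w
        = (Fgrad (t + h) (z + w) - Fgrad (t + h) z - Hess (t + h) z w)
          + (Fgrad (t + h) z - Fgrad t z - h • Gt t z)
          + ((Hess (t + h) z - Hess t z) w) := by
      simp only [ContinuousLinearMap.sub_apply]
      abel
    rw [hdecomp]
    calc ‖(Fgrad (t + h) (z + w) - Fgrad (t + h) z - Hess (t + h) z w)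
          + (Fgrad (t + h) z - Fgrad t z - h • Gt t z)
          + ((Hess (t + h) z - Hess t z) w)‖
        ≤ ‖Fgrad (t + h) (z + w) - Fgrad (t + h) z - Hess (t + h) z w‖
          + ‖Fgrad (t + h) z - Fgrad t z - h • Gt t z‖
          + ‖(Hess (t + h) z - Hess t z) w‖ := norm_add₃_le
      _ ≤ C1 * ‖w‖ ^ 2 / 2 + C3 * h ^ 2 / 2 + C2 * h * ‖w‖ := by
          exact add_le_add (add_le_add d1 d2) d3
      _ = C3 * h ^ 2 / 2 + C2 * h * ‖w‖ + C1 * ‖w‖ ^ 2 / 2 := by ring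
  -- the "ideal velocity" v at the minimizer
  obtain ⟨v, hv⟩ := hsurj t (ystar t) (-(Gt t (ystar t)))
  have hvb : m * ‖v‖ ≤ C0 := by
    have h1 := hHlow t (ystar t) v
    rw [hv, norm_neg] at h1
    exact h1.trans (hC0b t (ystar t))
  have hvb' : ‖v‖ ≤ C0 / m := by
    rw [le_div_iff₀ hm]
    linarith [hvb]
  -- Taylor bound for the minimizer path
  have hr : ‖ystar (t + h) - ystar t - h • v‖ ≤ h ^ 2 * Δ := by
    have hkey : Fgrad (t + h) (ystar t + h • v)
        = Fgrad (t + h) (ystar t + h • v) - Fgrad t (ystar t)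
          - h • Gt t (ystar t) - Hess t (ystar t) (h • v) := by
      rw [hzero t]
      have : Hess t (ystar t) (h • v) = h • (Hess t (ystar t) v) := by
        rw [map_smul]
      rw [this, hv]
      simp
    have hexp := hEXP (ystar t) (h • v)
    rw [← hkey] at hexp
    have hmono := mono (t + h) (ystar t + h • v) (ystar (t + h))
    rw [hzero (t + h), sub_zero] at hmono
    have hnorm_hv : ‖h • v‖ = h * ‖v‖ := by
      rw [norm_smul, Real.norm_eq_abs, abs_of_pos hh]
    rw [hnorm_hv] at hexp
    have heq : ‖ystar t + h • v - ystar (t + h)‖ = ‖ystar (t + h) - ystar t - h • v‖ := by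
      rw [← norm_neg]
      congr 1
      abel
    rw [heq] at hmono
    -- m * ‖r‖ ≤ C3 h²/2 + C2 h (h‖v‖) + C1 (h‖v‖)²/2 ≤ h² m Δ
    have hfin : m * ‖ystar (t + h) - ystar t - h • v‖ ≤ h ^ 2 * (m * Δ) := by
      have hb : C3 * h ^ 2 / 2 + C2 * h * (h * ‖v‖) + C1 * (h * ‖v‖) ^ 2 / 2
          ≤ h ^ 2 * (m * Δ) := by
        rw [hΔ]
        have hv0 : 0 ≤ ‖v‖ := norm_nonneg v
        have e : h ^ 2 * (m * (C0 ^ 2 * C1 / (2 * m ^ 3) + C0 * C2 / m ^ 2 + C3 / (2 * m)))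
            = C3 * h ^ 2 / 2 + C2 * h ^ 2 * (C0 / m) + C1 * h ^ 2 * (C0 / m) ^ 2 / 2 := by
          field_simp
          ring
        rw [e]
        have h1 : C2 * h * (h * ‖v‖) ≤ C2 * h ^ 2 * (C0 / m) := by
          have : C2 * h * (h * ‖v‖) = C2 * h ^ 2 * ‖v‖ := by ring
          rw [this]
          apply mul_le_mul_of_nonneg_left hvb' (by positivity)
        have h2 : C1 * (h * ‖v‖) ^ 2 / 2 ≤ C1 * h ^ 2 * (C0 / m) ^ 2 / 2 := by
          have hC0m : 0 ≤ C0 / m := by positivity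
          have h2a : ‖v‖ ^ 2 ≤ (C0 / m) ^ 2 := by nlinarith
          have h2b : C1 * h ^ 2 * ‖v‖ ^ 2 ≤ C1 * h ^ 2 * (C0 / m) ^ 2 :=
            mul_le_mul_of_nonneg_left h2a (by positivity)
          have h2c : C1 * (h * ‖v‖) ^ 2 / 2 = C1 * h ^ 2 * ‖v‖ ^ 2 / 2 := by ring
          rw [h2c]
          linarith
        linarith
      linarith [hmono.trans hexp]
    have := hfin
    nlinarith [norm_nonneg (ystar (t + h) - ystar t - h • v)]
  -- solution w at the current point
  obtain ⟨w, hw⟩ := hsurj t y (-(Gt t y))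
  -- bound ‖-Htil g - w‖
  have hA : m * ‖(-(Htil (Gt t y))) - w‖ ≤ ε * C0 := by
    have h1 := hHlow t y ((-(Htil (Gt t y))) - w)
    have h2 : Hess t y ((-(Htil (Gt t y))) - w)
        = (ContinuousLinearMap.id ℝ (EuclideanSpace ℝ (Fin n))
            - (Hess t y).comp Htil) (Gt t y) := by
      rw [map_sub, map_neg, hw]
      simp [ContinuousLinearMap.sub_apply]
      abel
    rw [h2] at h1
    have h3 : ‖(ContinuousLinearMap.id ℝ (EuclideanSpace ℝ (Fin n))
        - (Hess t y).comp Htil) (Gt t y)‖ ≤ ε * C0 := by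
      calc ‖(ContinuousLinearMap.id ℝ (EuclideanSpace ℝ (Fin n))
            - (Hess t y).comp Htil) (Gt t y)‖
          ≤ ‖ContinuousLinearMap.id ℝ (EuclideanSpace ℝ (Fin n))
            - (Hess t y).comp Htil‖ * ‖Gt t y‖ := ContinuousLinearMap.le_opNorm _ _
        _ ≤ ε * C0 := by
            apply mul_le_mul hH (hC0b t y) (norm_nonneg _)
            exact hε
    exact h1.trans h3
  -- bound ‖w - v‖
  have hB : m * ‖w - v‖ ≤ C2 * ‖y - ystar t‖ + C1 * ‖y - ystar t‖ * ‖v‖ := by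
    have h1 := hHlow t y (w - v)
    have h2 : Hess t y (w - v)
        = (Gt t (ystar t) - Gt t y) - (Hess t y - Hess t (ystar t)) v := by
      rw [map_sub, hw]
      have : Hess t (ystar t) v = -(Gt t (ystar t)) := hv
      simp [ContinuousLinearMap.sub_apply, this]
      abel
    rw [h2] at h1
    have h3 : ‖(Gt t (ystar t) - Gt t y) - (Hess t y - Hess t (ystar t)) v‖
        ≤ C2 * ‖y - ystar t‖ + C1 * ‖y - ystar t‖ * ‖v‖ := by
      have ha : ‖Gt t (ystar t) - Gt t y‖ ≤ C2 * ‖y - ystar t‖ := by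
        have := hC2b t (ystar t) y
        rwa [show ‖ystar t - y‖ = ‖y - ystar t‖ from norm_sub_rev _ _] at this
      have hb : ‖(Hess t y - Hess t (ystar t)) v‖ ≤ C1 * ‖y - ystar t‖ * ‖v‖ := by
        calc ‖(Hess t y - Hess t (ystar t)) v‖
            ≤ ‖Hess t y - Hess t (ystar t)‖ * ‖v‖ := ContinuousLinearMap.le_opNorm _ _
          _ ≤ (C1 * ‖y - ystar t‖) * ‖v‖ :=
              mul_le_mul_of_nonneg_right (hC1b t y (ystar t)) (norm_nonneg v)
          _ = C1 * ‖y - ystar t‖ * ‖v‖ := by ring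
      calc ‖(Gt t (ystar t) - Gt t y) - (Hess t y - Hess t (ystar t)) v‖
          ≤ ‖Gt t (ystar t) - Gt t y‖ + ‖(Hess t y - Hess t (ystar t)) v‖ :=
            norm_sub_le _ _
        _ ≤ C2 * ‖y - ystar t‖ + C1 * ‖y - ystar t‖ * ‖v‖ := add_le_add ha hb
    exact h1.trans h3
  -- final assembly
  set d := ‖y - ystar t‖ with hd
  have hd0 : 0 ≤ d := norm_nonneg _
  have hdecomp : (y - h • Htil (Gt t y)) - ystar (t + h)
      = (y - ystar t) + h • ((-(Htil (Gt t y))) - v)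
        - (ystar (t + h) - ystar t - h • v) := by
    rw [smul_sub, smul_neg]
    abel
  rw [hdecomp]
  have htri : ‖(y - ystar t) + h • ((-(Htil (Gt t y))) - v)
        - (ystar (t + h) - ystar t - h • v)‖
      ≤ d + h * ‖(-(Htil (Gt t y))) - v‖ + ‖ystar (t + h) - ystar t - h • v‖ := by
    calc ‖(y - ystar t) + h • ((-(Htil (Gt t y))) - v)
          - (ystar (t + h) - ystar t - h • v)‖
        ≤ ‖(y - ystar t) + h • ((-(Htil (Gt t y))) - v)‖
          + ‖ystar (t + h) - ystar t - h • v‖ := norm_sub_le _ _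
      _ ≤ ‖y - ystar t‖ + ‖h • ((-(Htil (Gt t y))) - v)‖
          + ‖ystar (t + h) - ystar t - h • v‖ := by
          have := norm_add_le (y - ystar t) (h • ((-(Htil (Gt t y))) - v))
          linarith
      _ = d + h * ‖(-(Htil (Gt t y))) - v‖ + ‖ystar (t + h) - ystar t - h • v‖ := by
          rw [norm_smul, Real.norm_eq_abs, abs_of_pos hh]
  have hAB : ‖(-(Htil (Gt t y))) - v‖
      ≤ ‖(-(Htil (Gt t y))) - w‖ + ‖w - v‖ := by
    have : (-(Htil (Gt t y))) - v = ((-(Htil (Gt t y))) - w) + (w - v) := by abel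
    rw [this]
    exact norm_add_le _ _
  have hA' : ‖(-(Htil (Gt t y))) - w‖ ≤ C0 / m * ε := by
    rw [div_mul_eq_mul_div, le_div_iff₀ hm]
    nlinarith [hA]
  have hB' : ‖w - v‖ ≤ (C0 * C1 / m ^ 2 + C2 / m) * d := by
    have hm2 : (0:ℝ) < m ^ 2 := by positivity
    have he : (C0 * C1 / m ^ 2 + C2 / m) * d = ((C0 * C1 + C2 * m) * d) / m ^ 2 := by
      field_simp
    rw [he, le_div_iff₀ hm2]
    -- m² ‖w-v‖ ≤ (C0 C1 + C2 m) d, using m ‖w-v‖ ≤ C2 d + C1 d ‖v‖ and m ‖v‖ ≤ C0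
    linarith [mul_le_mul_of_nonneg_left hB hm.le,
      mul_le_mul_of_nonneg_left hvb (mul_nonneg hC1 hd0)]
  have hstep : h * ‖(-(Htil (Gt t y))) - v‖
      ≤ h * ((C0 / m * ε) + (C0 * C1 / m ^ 2 + C2 / m) * d) := by
    apply mul_le_mul_of_nonneg_left _ hh.le
    calc ‖(-(Htil (Gt t y))) - v‖ ≤ ‖(-(Htil (Gt t y))) - w‖ + ‖w - v‖ := hAB
      _ ≤ (C0 / m * ε) + (C0 * C1 / m ^ 2 + C2 / m) * d := add_le_add hA' hB'
  calc ‖(y - ystar t) + h • ((-(Htil (Gt t y))) - v)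
        - (ystar (t + h) - ystar t - h • v)‖
      ≤ d + h * ‖(-(Htil (Gt t y))) - v‖ + ‖ystar (t + h) - ystar t - h • v‖ := htri
    _ ≤ d + h * ((C0 / m * ε) + (C0 * C1 / m ^ 2 + C2 / m) * d) + h ^ 2 * Δ := by
        linarith [hstep, hr]
    _ = σ * d + h * (C0 / m) * ε + h ^ 2 * Δ := by
        rw [hσ]
        ring
end

section
/- Let (a_k)_{k≥0} be a sequence of nonnegative reals, and let α₀, α₁ ≥ 0, α₂ > 0 and τ ∈ (0,1) be such that a_{k+1} ≤ α₂ a_k² + α₁ a_k + α₀ for all k. Suppose α₁ < τ, a_0 ≤ (τ − α₁)/α₂, and τ·(τ − α₁)/α₂ + α₀ ≤ (τ − α₁)/α₂. Then for every k ≥ 0, a_k ≤ (τ − α₁)/α₂ and a_k ≤ τ^k a_0 + α₀ (1 − τ^k)/(1 − τ); in particular limsup_{k→∞} a_k ≤ α₀/(1 − τ). -/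
/-- quadratic error recursion lemma (engine of Theorem 2). -/
theorem stmt_17 (a : ℕ → ℝ) (α₀ α₁ α₂ τ : ℝ)
    (ha : ∀ k, 0 ≤ a k)
    (hα₀ : 0 ≤ α₀) (hα₁ : 0 ≤ α₁) (hα₂ : 0 < α₂)
    (hτ0 : 0 < τ) (hτ1 : τ < 1)
    (hrec : ∀ k, a (k + 1) ≤ α₂ * (a k) ^ 2 + α₁ * a k + α₀)
    (h1 : α₁ < τ)
    (h2 : a 0 ≤ (τ - α₁) / α₂)
    (h3 : τ * ((τ - α₁) / α₂) + α₀ ≤ (τ - α₁) / α₂) :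
    (∀ k, a k ≤ (τ - α₁) / α₂ ∧ a k ≤ τ ^ k * a 0 + α₀ * (1 - τ ^ k) / (1 - τ))
      ∧ Filter.limsup a Filter.atTop ≤ α₀ / (1 - τ) := by
  have hτ1' : 0 < 1 - τ := by linarith
  have hmain : ∀ k, a k ≤ (τ - α₁) / α₂ ∧
      a k ≤ τ ^ k * a 0 + α₀ * (1 - τ ^ k) / (1 - τ) := by
    intro k
    induction k with
    | zero => exact ⟨h2, by simp⟩
    | succ k ih =>
      obtain ⟨ihR, ihB⟩ := ih
      have hA : α₂ * a k ≤ τ - α₁ := by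
        have := (le_div_iff₀ hα₂).mp ihR
        linarith [this]
      have key : a (k + 1) ≤ τ * a k + α₀ := by
        have h := hrec k
        have hq : α₂ * (a k) ^ 2 + α₁ * a k ≤ τ * a k := by
          have := mul_le_mul_of_nonneg_right hA (ha k)
          nlinarith [ha k]
        linarith
      constructor
      · calc a (k + 1) ≤ τ * a k + α₀ := key
          _ ≤ τ * ((τ - α₁) / α₂) + α₀ :=
            add_le_add_left (mul_le_mul_of_nonneg_left ihR hτ0.le) _
          _ ≤ (τ - α₁) / α₂ := h3
      · calc a (k + 1) ≤ τ * a k + α₀ := key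
          _ ≤ τ * (τ ^ k * a 0 + α₀ * (1 - τ ^ k) / (1 - τ)) + α₀ :=
            add_le_add_left (mul_le_mul_of_nonneg_left ihB hτ0.le) _
          _ = τ ^ (k + 1) * a 0 + α₀ * (1 - τ ^ (k + 1)) / (1 - τ) := by
            field_simp
            ring
  refine ⟨hmain, ?_⟩
  have hb : ∀ k, a k ≤ τ ^ k * a 0 + α₀ / (1 - τ) := by
    intro k
    refine (hmain k).2.trans (add_le_add_right ?_ _)
    rw [div_le_div_iff₀ hτ1' hτ1']
    have : 0 ≤ τ ^ k := pow_nonneg hτ0.le k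
    nlinarith [mul_nonneg (mul_nonneg hα₀ this) hτ1'.le]
  have htend : Filter.Tendsto (fun k => τ ^ k * a 0 + α₀ / (1 - τ)) Filter.atTop
      (nhds (0 * a 0 + α₀ / (1 - τ))) := by
    exact Filter.Tendsto.add
      ((tendsto_pow_atTop_nhds_zero_of_lt_one hτ0.le hτ1).mul_const _) tendsto_const_nhds
  have hls : Filter.limsup (fun k => τ ^ k * a 0 + α₀ / (1 - τ)) Filter.atTop
      = α₀ / (1 - τ) := by
    have := htend.limsup_eq
    simpa using this
  calc Filter.limsup a Filter.atTop
      ≤ Filter.limsup (fun k => τ ^ k * a 0 + α₀ / (1 - τ)) Filter.atTop := by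
        refine Filter.limsup_le_limsup (Filter.Eventually.of_forall hb)
          (Filter.IsCoboundedUnder.of_frequently_ge
            (Filter.Frequently.of_forall (fun k => ha k)))
          (Filter.isBoundedUnder_of ⟨1 * |a 0| + α₀ / (1 - τ), fun k => by
            have : τ ^ k * a 0 ≤ 1 * |a 0| := by
              have h1 : τ ^ k ≤ 1 := pow_le_one₀ hτ0.le hτ1.le
              have h2 : a 0 ≤ |a 0| := le_abs_self _
              nlinarith [pow_nonneg hτ0.le k, abs_nonneg (a 0)]
            linarith⟩)
      _ = α₀ / (1 - τ) := hls
end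

section
/- Let the DAPC-G iterates be defined as follows: given y_0, y_1 ∈ E (with y_1 obtained arbitrarily) and a sequence of symmetric positive semidefinite linear maps H_k on E satisfying, for all k ≥ 1, both ‖id − (∇²_y F(t_k, y_k)) ∘ H_k‖ ≤ ε and ‖H_k‖ ≤ H̄, set y_{k+1|k} := y_k − H_k(∇_y F(t_k, y_k) − ∇_y F(t_{k−1}, y_k)) (prediction with backward-difference time derivative) and y_{k+1} := y_{k+1|k} − γ ∇_y F(t_{k+1}, y_{k+1|k}) (gradient correction). Define ρ := max(|1 − γm|, |1 − γL'|). If 0 < γ < 2/L' and ρσ < 1, then for every k ≥ 1: ‖y_k − y*(t_k)‖ ≤ (ρσ)^{k−1} ‖y_1 − y*(t_1)‖ + ρ · (hC0ε/m + h²Δ + h²C3H̄/2) · (1 − (ρσ)^{k−1})/(1 − ρσ). In particular limsup_{k→∞} ‖y_k − y*(t_k)‖ ≤ ρ/(1 − ρσ) · (hC0ε/m + h²Δ + h²C3H̄/2). -/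
open scoped InnerProductSpace

local notation "E" n => EuclideanSpace ℝ (Fin n)

section helpers

variable {X : Type*} [NormedAddCommGroup X] [InnerProductSpace ℝ X]

/-- division trick -/
lemma div_trick {u c m : ℝ} (hm : 0 < m) (hc : 0 ≤ c) (hu : 0 ≤ u)
    (hh : m * u ^ 2 ≤ c * u) : u ≤ c / m := by
  rw [le_div_iff₀ hm]
  rcases eq_or_lt_of_le hu with h0 | h0
  · nlinarith
  · nlinarith

/-- quadratic Taylor bound, remainder measured from the left end -/
lemma quadBound {f f' : ℝ → X} (hf : ∀ s, HasDerivAt f (f' s) s)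
    {a b K : ℝ} (hab : a ≤ b) (c : X) (hK : 0 ≤ K)
    (hb : ∀ s ∈ Set.Icc a b, ‖f' s - c‖ ≤ K * (s - a)) :
    ‖f b - f a - (b - a) • c‖ ≤ K * (b - a) ^ 2 / 2 := by
  set g : ℝ → X := fun s => f s - f a - (s - a) • c with hg
  have hg' : ∀ s, HasDerivAt g (f' s - c) s := by
    intro s
    have h1 : HasDerivAt (fun s : ℝ => (s - a) • c) c s := by
      simpa using (((hasDerivAt_id s).sub (hasDerivAt_const s a))).smul_const c
    have := ((hf s).sub (hasDerivAt_const s (f a))).sub h1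
    simp only [sub_zero] at this
    exact this
  have hB : ∀ x : ℝ, HasDerivAt (fun s => K * (s - a) ^ 2 / 2) (K * (x - a)) x := by
    intro x
    have h0 : HasDerivAt (fun s : ℝ => s - a) 1 x := by
      have := (hasDerivAt_id x).sub (hasDerivAt_const x a)
      simp only [sub_zero] at this
      exact this
    have := ((h0.pow 2).const_mul K).div_const 2
    refine this.congr_deriv ?_
    simp
    ring
  have := image_norm_le_of_norm_deriv_right_le_deriv_boundary
    (f := g) (f' := fun s => f' s - c) (a := a) (b := b)
    (fun s _ => (hg' s).continuousAt.continuousWithinAt)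
    (fun s hs => (hg' s).hasDerivWithinAt)
    (by simp [hg])
    hB
    (fun s hs => hb s (Set.Ico_subset_Icc_self hs))
  simpa [hg] using this (Set.right_mem_Icc.2 hab)

/-- quadratic Taylor bound, remainder measured from the right end -/
lemma quadBound' {f f' : ℝ → X} (hf : ∀ s, HasDerivAt f (f' s) s)
    {a b K : ℝ} (hab : a ≤ b) (c : X) (hK : 0 ≤ K)
    (hb : ∀ s ∈ Set.Icc a b, ‖f' s - c‖ ≤ K * (b - s)) :
    ‖f b - f a - (b - a) • c‖ ≤ K * (b - a) ^ 2 / 2 := by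
  have hrefl : ∀ s : ℝ, HasDerivAt (fun u : ℝ => f (a + b - u)) (-f' (a + b - s)) s := by
    intro s
    have h1 : HasDerivAt (fun u : ℝ => a + b - u) (-1 : ℝ) s := by
      have := (hasDerivAt_const s (a + b)).sub (hasDerivAt_id s)
      simp only [zero_sub] at this
      exact this
    have := HasDerivAt.scomp s (hf (a + b - s)) h1
    simp only [neg_smul, one_smul] at this
    exact this
  have := quadBound hrefl hab (-c) hK (fun s hs => by
    have hmem : a + b - s ∈ Set.Icc a b := by
      constructor
      · linarith [hs.2]
      · linarith [hs.1]
    have h2 := hb (a + b - s) hmem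
    have h3 : -f' (a + b - s) - -c = -(f' (a + b - s) - c) := by ring_nf; module
    rw [h3, norm_neg]
    calc ‖f' (a + b - s) - c‖ ≤ K * (b - (a + b - s)) := h2
      _ = K * (s - a) := by ring)
  have heq : ‖f (a + b - b) - f (a + b - a) - (b - a) • (-c)‖
      = ‖f b - f a - (b - a) • c‖ := by
    have : f (a + b - b) - f (a + b - a) - (b - a) • (-c)
        = -(f b - f a - (b - a) • c) := by
      simp only [add_sub_cancel_right, add_sub_cancel_left]
      module
    rw [this, norm_neg]
  calc ‖f b - f a - (b - a) • c‖ = _ := heq.symm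
    _ ≤ K * (b - a) ^ 2 / 2 := this

/-- mean value: constant bound on derivative on [a,b] -/
lemma mvtBound {f f' : ℝ → X} (hf : ∀ s, HasDerivAt f (f' s) s)
    {a b C : ℝ} (hab : a ≤ b) (hb : ∀ s ∈ Set.Icc a b, ‖f' s‖ ≤ C) :
    ‖f b - f a‖ ≤ C * (b - a) := by
  have := norm_image_sub_le_of_norm_deriv_le_segment'
    (f := f) (f' := f') (a := a) (b := b)
    (fun s hs => (hf s).hasDerivWithinAt)
    (fun s hs => hb s (Set.Ico_subset_Icc_self hs))
  exact this b (Set.right_mem_Icc.2 hab)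

/-- strong monotonicity from a Hessian lower bound -/
lemma strongMono {G : X → X} {Hs : X → X →L[ℝ] X} (hG : ∀ x, HasFDerivAt G (Hs x) x)
    {m : ℝ} (hm : ∀ x v, m * ‖v‖ ^ 2 ≤ ⟪Hs x v, v⟫_ℝ) (a b : X) :
    m * ‖a - b‖ ^ 2 ≤ ⟪G a - G b, a - b⟫_ℝ := by
  set d := a - b with hd
  set φ : ℝ → ℝ := fun τ => ⟪G (b + τ • d), d⟫_ℝ - τ * (m * ‖d‖ ^ 2) with hφ
  have hline : ∀ τ : ℝ, HasDerivAt (fun τ : ℝ => b + τ • d) d τ := by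
    intro τ
    simpa using ((hasDerivAt_id τ).smul_const d).const_add b
  have hφ' : ∀ τ : ℝ, HasDerivAt φ (⟪Hs (b + τ • d) d, d⟫_ℝ - m * ‖d‖ ^ 2) τ := by
    intro τ
    have h1 : HasDerivAt (fun τ : ℝ => G (b + τ • d)) (Hs (b + τ • d) d) τ :=
      (hG (b + τ • d)).comp_hasDerivAt τ (hline τ)
    have h2 := (HasDerivAt.inner ℝ h1 (hasDerivAt_const τ d))
    have h3 : HasDerivAt (fun τ : ℝ => τ * (m * ‖d‖ ^ 2)) (m * ‖d‖ ^ 2) τ := by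
      simpa using (hasDerivAt_id τ).mul_const (m * ‖d‖ ^ 2)
    have := h2.sub h3
    simp only [inner_zero_right, zero_add] at this
    exact this
  have hmono : MonotoneOn φ (Set.Icc 0 1) := by
    apply monotoneOn_of_deriv_nonneg (convex_Icc 0 1)
    · exact Continuous.continuousOn (by
        have : Differentiable ℝ φ := fun τ => (hφ' τ).differentiableAt
        exact this.continuous)
    · intro x hx
      exact ((hφ' x).differentiableAt).differentiableWithinAt
    · intro x hx
      rw [(hφ' x).deriv]
      have := hm (b + x • d) d
      linarith
  have h01 : φ 0 ≤ φ 1 := hmono (by norm_num) (by norm_num) (by norm_num)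
  have he0 : φ 0 = ⟪G b, d⟫_ℝ := by simp [hφ]
  have he1 : φ 1 = ⟪G a, d⟫_ℝ - m * ‖d‖ ^ 2 := by
    simp [hφ, hd]
  rw [he0, he1] at h01
  rw [inner_sub_left]
  linarith

end helpers

set_option maxHeartbeats 1000000


section helpers2

variable {X : Type*} [NormedAddCommGroup X] [InnerProductSpace ℝ X]

/-- contraction estimate for `v - γ S v` for a self-adjoint operator
with spectrum in `[m, L']` -/
lemma contractionBound (S : X →L[ℝ] X)
    (hsa : ∀ v w : X, ⟪S v, w⟫_ℝ = ⟪v, S w⟫_ℝ)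
    {m L' : ℝ} (hm : 0 < m) (hmL : m ≤ L')
    (hstrong : ∀ v : X, m * ‖v‖ ^ 2 ≤ ⟪S v, v⟫_ℝ)
    (hsmooth : ∀ v : X, ⟪S v, v⟫_ℝ ≤ L' * ‖v‖ ^ 2)
    (γ : ℝ) (hγ : 0 ≤ γ) (v : X) :
    ‖v - γ • S v‖ ≤ max |1 - γ * m| |1 - γ * L'| * ‖v‖ := by
  set ρ := max |1 - γ * m| |1 - γ * L'| with hρ
  have hρ0 : 0 ≤ ρ := le_trans (abs_nonneg _) (le_max_left _ _)
  set c := L' - m with hc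
  have hc0 : 0 ≤ c := by linarith
  set w := S v - m • v with hw
  -- quadratic form facts for A u := S u - m • u
  have hA0 : ∀ u : X, 0 ≤ ⟪S u - m • u, u⟫_ℝ := by
    intro u
    have := hstrong u
    rw [inner_sub_left, real_inner_smul_left, real_inner_self_eq_norm_sq]
    linarith
  have hAc : ∀ u : X, ⟪S u - m • u, u⟫_ℝ ≤ c * ‖u‖ ^ 2 := by
    intro u
    have := hsmooth u
    rw [inner_sub_left, real_inner_smul_left, real_inner_self_eq_norm_sq]
    rw [hc]; ring_nf; nlinarith [hsmooth u]
  have hAsa : ∀ u u' : X, ⟪S u - m • u, u'⟫_ℝ = ⟪u, S u' - m • u'⟫_ℝ := by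
    intro u u'
    rw [inner_sub_left, inner_sub_right, hsa, real_inner_smul_left, real_inner_smul_right]
  -- key : ‖w‖^2 ≤ c * ⟪w, v⟫
  have hkey : ‖w‖ ^ 2 ≤ c * ⟪w, v⟫_ℝ := by
    have hA_w : ⟪S w - m • w, v⟫_ℝ = ‖w‖ ^ 2 := by
      rw [hAsa w v, ← hw, real_inner_self_eq_norm_sq]
    rcases eq_or_lt_of_le hc0 with hceq | hcpos
    · -- c = 0 : A is zero quadratic form, show w = 0
      have hzero : ∀ u : X, ⟪S u - m • u, u⟫_ℝ = 0 := by
        intro u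
        have h1 := hA0 u
        have h2 := hAc u
        rw [← hceq] at h2
        simp at h2
        linarith
      have hexp : ⟪S (v + w) - m • (v + w), v + w⟫_ℝ
          = ⟪S v - m • v, v⟫_ℝ + ⟪S v - m • v, w⟫_ℝ + ⟪S w - m • w, v⟫_ℝ
            + ⟪S w - m • w, w⟫_ℝ := by
        have : S (v + w) - m • (v + w) = (S v - m • v) + (S w - m • w) := by
          rw [map_add]; module
        rw [this, inner_add_left, inner_add_right, inner_add_right]
        ring
      have h1 : ⟪S v - m • v, w⟫_ℝ = ‖w‖ ^ 2 := by
        rw [← hw, real_inner_self_eq_norm_sq]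
      have h2 := hzero (v + w)
      rw [hexp, hzero v, hzero w, h1, hA_w] at h2
      have : ‖w‖ ^ 2 = 0 := by linarith
      rw [← hceq, zero_mul]
      linarith
    · -- c > 0
      set u := v - (1 / c) • w with hu
      have h0 := hA0 u
      have hAu : S u - m • u = w - (1 / c) • (S w - m • w) := by
        rw [hu, map_sub, map_smul]; module
      have hexp : ⟪S u - m • u, u⟫_ℝ
          = ⟪w, v⟫_ℝ - (1 / c) * ⟪w, w⟫_ℝ - (1 / c) * ⟪S w - m • w, v⟫_ℝ
            + (1 / c) ^ 2 * ⟪S w - m • w, w⟫_ℝ := by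
        rw [hAu, hu, inner_sub_left, inner_sub_right, inner_sub_right,
          real_inner_smul_left, real_inner_smul_left, real_inner_smul_right,
          real_inner_smul_right]
        ring
      have hAw2 : ⟪S w - m • w, w⟫_ℝ ≤ c * ‖w‖ ^ 2 := hAc w
      rw [hexp, hA_w, real_inner_self_eq_norm_sq] at h0
      have hcne : c ≠ 0 := ne_of_gt hcpos
      have : 0 ≤ ⟪w, v⟫_ℝ - (1 / c) * ‖w‖ ^ 2 := by
        have h3 : (1 / c) ^ 2 * ⟪S w - m • w, w⟫_ℝ ≤ (1 / c) * ‖w‖ ^ 2 := by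
          have := mul_le_mul_of_nonneg_left hAw2 (sq_nonneg (1 / c))
          calc (1 / c) ^ 2 * ⟪S w - m • w, w⟫_ℝ ≤ (1 / c) ^ 2 * (c * ‖w‖ ^ 2) := this
            _ = (1 / c) * ‖w‖ ^ 2 := by field_simp
        linarith
      calc ‖w‖ ^ 2 = c * ((1 / c) * ‖w‖ ^ 2) := by field_simp
        _ ≤ c * ⟪w, v⟫_ℝ := by
            apply mul_le_mul_of_nonneg_left _ hc0
            linarith
  -- norm of S v squared
  have hSv : ‖S v‖ ^ 2 ≤ (m + L') * ⟪S v, v⟫_ℝ - m * L' * ‖v‖ ^ 2 := by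
    have hwv : ⟪w, v⟫_ℝ = ⟪S v, v⟫_ℝ - m * ‖v‖ ^ 2 := by
      rw [hw, inner_sub_left, real_inner_smul_left, real_inner_self_eq_norm_sq]
    have hSvw : S v = w + m • v := by rw [hw]; module
    have hnorm : ‖S v‖ ^ 2 = ‖w‖ ^ 2 + 2 * (m * ⟪w, v⟫_ℝ) + m ^ 2 * ‖v‖ ^ 2 := by
      rw [hSvw, norm_add_sq_real, real_inner_smul_right, norm_smul]
      rw [Real.norm_eq_abs, abs_of_pos hm]
      ring
    rw [hnorm, hwv]
    have := hkey
    rw [hwv, hc] at this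
    nlinarith [this]
  -- final computation
  have hfin : ‖v - γ • S v‖ ^ 2 ≤ ρ ^ 2 * ‖v‖ ^ 2 := by
    have hexp : ‖v - γ • S v‖ ^ 2 = ‖v‖ ^ 2 - 2 * (γ * ⟪S v, v⟫_ℝ) + γ ^ 2 * ‖S v‖ ^ 2 := by
      rw [norm_sub_sq_real, real_inner_smul_right, norm_smul, Real.norm_eq_abs]
      rw [real_inner_comm, mul_pow, sq_abs]
    have h1 : (1 - γ * m) ^ 2 ≤ ρ ^ 2 := by
      have := le_max_left |1 - γ * m| |1 - γ * L'|
      rw [← hρ] at this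
      nlinarith [abs_nonneg (1 - γ * m), sq_abs (1 - γ * m)]
    have h2 : (1 - γ * L') ^ 2 ≤ ρ ^ 2 := by
      have := le_max_right |1 - γ * m| |1 - γ * L'|
      rw [← hρ] at this
      nlinarith [abs_nonneg (1 - γ * L'), sq_abs (1 - γ * L')]
    have hq1 : m * ‖v‖ ^ 2 ≤ ⟪S v, v⟫_ℝ := hstrong v
    have hq2 : ⟪S v, v⟫_ℝ ≤ L' * ‖v‖ ^ 2 := hsmooth v
    rw [hexp]
    have hγ2 : (0 : ℝ) ≤ γ ^ 2 := sq_nonneg γ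
    have hSv' : γ ^ 2 * ‖S v‖ ^ 2 ≤ γ ^ 2 * ((m + L') * ⟪S v, v⟫_ℝ - m * L' * ‖v‖ ^ 2) :=
      mul_le_mul_of_nonneg_left hSv hγ2
    rcases le_or_gt 0 (γ ^ 2 * (m + L') - 2 * γ) with hcase | hcase
    · nlinarith [mul_nonneg hcase (sub_nonneg.2 hq2)]
    · nlinarith [mul_nonneg (le_of_lt (neg_pos.2 hcase)) (sub_nonneg.2 hq1)]
  have hvρ : 0 ≤ ρ * ‖v‖ := mul_nonneg hρ0 (norm_nonneg v)
  nlinarith [norm_nonneg (v - γ • S v), hfin]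

/-- surjectivity of a coercive operator on a Euclidean space -/
lemma existsInv {n : ℕ} (S : (E n) →L[ℝ] (E n)) {m : ℝ} (hm : 0 < m)
    (hstrong : ∀ v : E n, m * ‖v‖ ^ 2 ≤ ⟪S v, v⟫_ℝ) (u : E n) :
    ∃ p, S p = u := by
  have hinj : Function.Injective S := by
    intro a b hab
    have h1 : S (a - b) = 0 := by rw [map_sub, hab, sub_self]
    have h2 := hstrong (a - b)
    rw [h1] at h2
    simp only [inner_zero_left] at h2
    have : ‖a - b‖ ^ 2 ≤ 0 := by nlinarith
    have : ‖a - b‖ = 0 := by nlinarith [sq_nonneg ‖a - b‖, norm_nonneg (a - b)]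
    rwa [norm_sub_eq_zero_iff] at this
  have hsurj : Function.Surjective (S : (E n) →ₗ[ℝ] (E n)) :=
    (LinearMap.injective_iff_surjective (f := (S : (E n) →ₗ[ℝ] (E n)))).1 hinj
  exact hsurj u

end helpers2

/-- Theorem 1 for DAPC-G: prediction with the backward-difference
time derivative, y_{k+1|k} = y_k − H_k(∇F(t_k,y_k) − ∇F(t_{k−1},y_k)), followed
by a gradient correction; where ‖H_k‖ ≤ H̄ (written `Hbar`). Convergence is
Q-linear with rate ρσ < 1 up to an asymptotic error
ρ/(1−ρσ)·(hC0ε/m + h²Δ + h²C3H̄/2). -/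
theorem stmt_18 {n : ℕ} (hn : 1 ≤ n)
    (F : ℝ → (E n) → ℝ)
    (Fgrad : ℝ → (E n) → (E n))
    (Hess : ℝ → (E n) → (E n) →L[ℝ] (E n))
    (Gt Gtt : ℝ → (E n) → (E n))
    (m L' C0 C1 C2 C3 : ℝ)
    (hm : 0 < m) (hmL : m ≤ L')
    (hC0 : 0 ≤ C0) (hC1 : 0 ≤ C1) (hC2 : 0 ≤ C2) (hC3 : 0 ≤ C3)
    (hF2 : ∀ t, ContDiff ℝ 2 (F t))
    (hG1 : ContDiff ℝ 1 (Function.uncurry Fgrad))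
    (hgrad : ∀ t y, HasGradientAt (F t) (Fgrad t y) y)
    (hhess : ∀ t y, HasFDerivAt (Fgrad t) (Hess t y) y)
    (ht : ∀ t y, HasDerivAt (fun s => Fgrad s y) (Gt t y) t)
    (htt : ∀ t y, HasDerivAt (fun s => Gt s y) (Gtt t y) t)
    (hstrong : ∀ t y (v : E n), m * ‖v‖ ^ 2 ≤ ⟪Hess t y v, v⟫_ℝ)
    (hsmooth : ∀ t y (v : E n), ⟪Hess t y v, v⟫_ℝ ≤ L' * ‖v‖ ^ 2)
    (hC0b : ∀ t y, ‖Gt t y‖ ≤ C0)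
    (hC1b : ∀ t y y', ‖Hess t y - Hess t y'‖ ≤ C1 * ‖y - y'‖)
    (hC2b : ∀ t y y', ‖Gt t y - Gt t y'‖ ≤ C2 * ‖y - y'‖)
    (hC3b : ∀ t y, ‖Gtt t y‖ ≤ C3)
    (ystar : ℝ → E n)
    (hmin : ∀ t, IsMinOn (F t) Set.univ (ystar t))
    (h γ ε Hbar Δ σ ρ : ℝ) (hh : 0 < h) (hε : 0 ≤ ε) (hHbar : 0 ≤ Hbar)
    (hγ : 0 < γ) (hγ2 : γ < 2 / L')
    (hΔ : Δ = C0 ^ 2 * C1 / (2 * m ^ 3) + C0 * C2 / m ^ 2 + C3 / (2 * m))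
    (hσ : σ = 1 + h * (C0 * C1 / m ^ 2 + C2 / m))
    (hρ : ρ = max |1 - γ * m| |1 - γ * L'|)
    (hρσ : ρ * σ < 1)
    (tk : ℕ → ℝ) (htk : ∀ k : ℕ, tk k = k * h)
    (y ypred : ℕ → E n)
    (H : ℕ → (E n) →L[ℝ] (E n))
    (hHsa : ∀ k, 1 ≤ k → IsSelfAdjoint (H k))
    (hHpsd : ∀ k, 1 ≤ k → ∀ v : E n, 0 ≤ ⟪H k v, v⟫_ℝ)
    (hHerr : ∀ k, 1 ≤ k →
      ‖ContinuousLinearMap.id ℝ (E n) - (Hess (tk k) (y k)).comp (H k)‖ ≤ ε)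
    (hHnorm : ∀ k, 1 ≤ k → ‖H k‖ ≤ Hbar)
    (hpred : ∀ k, 1 ≤ k →
      ypred k = y k - H k (Fgrad (tk k) (y k) - Fgrad (tk (k - 1)) (y k)))
    (hcorr : ∀ k, 1 ≤ k → y (k + 1) = ypred k - γ • Fgrad (tk (k + 1)) (ypred k)) :
    (∀ k : ℕ, 1 ≤ k → ‖y k - ystar (tk k)‖
        ≤ (ρ * σ) ^ (k - 1) * ‖y 1 - ystar (tk 1)‖
          + ρ * (h * C0 * ε / m + h ^ 2 * Δ + h ^ 2 * C3 * Hbar / 2)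
            * (1 - (ρ * σ) ^ (k - 1)) / (1 - ρ * σ))
    ∧ Filter.limsup (fun k => ‖y k - ystar (tk k)‖) Filter.atTop
        ≤ ρ / (1 - ρ * σ) * (h * C0 * ε / m + h ^ 2 * Δ + h ^ 2 * C3 * Hbar / 2) := by
  classical
  -- ρ, σ positivity facts
  have hρ0 : 0 ≤ ρ := by rw [hρ]; exact le_trans (abs_nonneg _) (le_max_left _ _)
  have hσ1 : 1 ≤ σ := by
    have h1 : 0 ≤ C0 * C1 / m ^ 2 + C2 / m := by positivity
    nlinarith [mul_nonneg hh.le h1, hσ.ge, hσ.le]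
  have hσ0 : 0 < σ := by linarith
  have hq0 : 0 ≤ ρ * σ := mul_nonneg hρ0 hσ0.le
  have hq1 : ρ * σ < 1 := hρσ
  have h1q : 0 < 1 - ρ * σ := by linarith
  have hρ1 : ρ < 1 := by nlinarith
  have hΔ0 : 0 ≤ Δ := by rw [hΔ]; positivity
  have herr0 : 0 ≤ h * C0 * ε / m + h ^ 2 * Δ + h ^ 2 * C3 * Hbar / 2 := by positivity
  -- self-adjointness of the Hessian
  have hsym : ∀ t z (v w : E n), ⟪Hess t z v, w⟫_ℝ = ⟪v, Hess t z w⟫_ℝ := by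
    intro t z v w
    set D : (E n) →L[ℝ] ((E n) →L[ℝ] ℝ) :=
      ((InnerProductSpace.toDual ℝ (E n)).toContinuousLinearEquiv.toContinuousLinearMap :
        (E n) →L[ℝ] (StrongDual ℝ (E n))) with hD
    have hDapp : ∀ (g u : E n), D g u = ⟪g, u⟫_ℝ := by
      intro g u
      simp [hD, InnerProductSpace.toDual_apply_apply]
    have h1 : ∀ u : E n, HasFDerivAt (F t) (D (Fgrad t u)) u := by
      intro u
      exact hgrad t u
    have h2 : HasFDerivAt (fun u => D (Fgrad t u)) (D.comp (Hess t z)) z :=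
      D.hasFDerivAt.comp z (hhess t z)
    have h3 := second_derivative_symmetric h1 h2 v w
    have h4 : D (Hess t z v) w = D (Hess t z w) v := h3
    rw [hDapp, hDapp] at h4
    rw [h4, real_inner_comm]
  -- zero gradient at the minimizer
  have hstar0 : ∀ t, Fgrad t (ystar t) = 0 := by
    intro t
    have hloc : IsLocalMin (F t) (ystar t) := (hmin t).isLocalMin (by simp)
    have h0 : (InnerProductSpace.toDual ℝ (E n)) (Fgrad t (ystar t)) = 0 :=
      hloc.hasFDerivAt_eq_zero (hgrad t (ystar t))
    have := (InnerProductSpace.toDual ℝ (E n)).map_eq_zero_iff.mp h0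
    exact this
  -- inverse of the Hessian applied to Gt
  have hPex : ∀ t x, ∃ p : E n, Hess t x p = Gt t x := by
    intro t x
    exact existsInv (Hess t x) hm (fun v => hstrong t x v) (Gt t x)
  choose P hP using hPex
  have hPb : ∀ t x, ‖P t x‖ ≤ C0 / m := by
    intro t x
    apply div_trick hm hC0 (norm_nonneg _)
    calc m * ‖P t x‖ ^ 2 ≤ ⟪Hess t x (P t x), P t x⟫_ℝ := hstrong t x _
      _ = ⟪Gt t x, P t x⟫_ℝ := by rw [hP]
      _ ≤ ‖Gt t x‖ * ‖P t x‖ := real_inner_le_norm _ _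
      _ ≤ C0 * ‖P t x‖ := mul_le_mul_of_nonneg_right (hC0b t x) (norm_nonneg _)
  have hPlip : ∀ t x x', ‖P t x - P t x'‖
      ≤ (C2 * ‖x - x'‖ + C1 * ‖x - x'‖ * (C0 / m)) / m := by
    intro t x x'
    have hcnn : 0 ≤ C2 * ‖x - x'‖ + C1 * ‖x - x'‖ * (C0 / m) := by positivity
    apply div_trick hm hcnn (norm_nonneg _)
    set u := P t x - P t x' with hu
    have hkey : Hess t x u = (Gt t x - Gt t x') - (Hess t x - Hess t x') (P t x') := by
      rw [hu, map_sub, hP t x, ContinuousLinearMap.sub_apply, hP t x']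
      abel
    have hb1 : ‖(Hess t x - Hess t x') (P t x')‖ ≤ C1 * ‖x - x'‖ * (C0 / m) := by
      calc ‖(Hess t x - Hess t x') (P t x')‖
          ≤ ‖Hess t x - Hess t x'‖ * ‖P t x'‖ := ContinuousLinearMap.le_opNorm _ _
        _ ≤ (C1 * ‖x - x'‖) * (C0 / m) := by
            apply mul_le_mul (hC1b t x x') (hPb t x') (norm_nonneg _)
            positivity
        _ = C1 * ‖x - x'‖ * (C0 / m) := by ring
    calc m * ‖u‖ ^ 2 ≤ ⟪Hess t x u, u⟫_ℝ := hstrong t x u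
      _ ≤ ‖Hess t x u‖ * ‖u‖ := real_inner_le_norm _ _
      _ ≤ (C2 * ‖x - x'‖ + C1 * ‖x - x'‖ * (C0 / m)) * ‖u‖ := by
          apply mul_le_mul_of_nonneg_right _ (norm_nonneg u)
          rw [hkey]
          calc ‖(Gt t x - Gt t x') - (Hess t x - Hess t x') (P t x')‖
              ≤ ‖Gt t x - Gt t x'‖ + ‖(Hess t x - Hess t x') (P t x')‖ := norm_sub_le _ _
            _ ≤ C2 * ‖x - x'‖ + C1 * ‖x - x'‖ * (C0 / m) :=
                add_le_add (hC2b t x x') hb1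
  -- time mean value bounds
  have hFt : ∀ (x : E n) (t1 t2 : ℝ), t1 ≤ t2 →
      ‖Fgrad t2 x - Fgrad t1 x‖ ≤ C0 * (t2 - t1) := by
    intro x t1 t2 h12
    exact mvtBound (fun s => ht s x) h12 (fun s _ => hC0b s x)
  have hGtT : ∀ (x : E n) (t1 t2 : ℝ), t1 ≤ t2 →
      ‖Gt t2 x - Gt t1 x‖ ≤ C3 * (t2 - t1) := by
    intro x t1 t2 h12
    exact mvtBound (fun s => htt s x) h12 (fun s _ => hC3b s x)
  -- contraction of the gradient correction step
  have hcontr : ∀ (t' : ℝ) (a b : E n),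
      ‖(a - γ • Fgrad t' a) - (b - γ • Fgrad t' b)‖ ≤ ρ * ‖a - b‖ := by
    intro t' a b
    have hd : ∀ z : E n, HasFDerivAt (fun u : E n => u - γ • Fgrad t' u)
        (ContinuousLinearMap.id ℝ (E n) - γ • Hess t' z) z := by
      intro z
      exact (hasFDerivAt_id z).sub ((hhess t' z).const_smul γ)
    have hno : ∀ z : E n, ‖ContinuousLinearMap.id ℝ (E n) - γ • Hess t' z‖ ≤ ρ := by
      intro z
      refine ContinuousLinearMap.opNorm_le_bound _ hρ0 (fun v => ?_)
      have hv := contractionBound (Hess t' z) (fun v w => hsym t' z v w) hm hmL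
        (fun v => hstrong t' z v) (fun v => hsmooth t' z v) γ hγ.le v
      rw [← hρ] at hv
      simpa [ContinuousLinearMap.sub_apply, ContinuousLinearMap.smul_apply] using hv
    have := convex_univ.norm_image_sub_le_of_norm_hasFDerivWithin_le
      (f := fun u : E n => u - γ • Fgrad t' u)
      (f' := fun z => ContinuousLinearMap.id ℝ (E n) - γ • Hess t' z)
      (fun z _ => (hd z).hasFDerivWithinAt) (fun z _ => hno z)
      (Set.mem_univ b) (Set.mem_univ a)
    simpa using this
  -- tracking bound for the optimal trajectory
  have htrack : ∀ t : ℝ,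
      ‖ystar (t + h) - (ystar t - h • P t (ystar t))‖ ≤ h ^ 2 * Δ := by
    intro t
    set y0 := ystar t with hy0
    set y1 := ystar (t + h) with hy1
    set d := y1 - y0 with hdd
    set g0 := Gt t y0 with hg0
    set P0 := P t y0 with hP0
    have hz1 : Fgrad (t + h) y1 = 0 := hstar0 (t + h)
    have hz0 : Fgrad t y0 = 0 := hstar0 t
    -- bound on ‖d‖
    have hdle : ‖d‖ ≤ C0 * h / m := by
      apply div_trick hm (mul_nonneg hC0 hh.le) (norm_nonneg _)
      have h1 : m * ‖d‖ ^ 2 ≤ ⟪Fgrad (t + h) y1 - Fgrad (t + h) y0, d⟫_ℝ := by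
        have := strongMono (hG := hhess (t + h)) (hm := fun x v => hstrong (t + h) x v) y1 y0
        exact this
      have h2 : ⟪Fgrad (t + h) y1 - Fgrad (t + h) y0, d⟫_ℝ
          = ⟪Fgrad t y0 - Fgrad (t + h) y0, d⟫_ℝ := by
        rw [hz1, hz0]
      have h3 : ⟪Fgrad t y0 - Fgrad (t + h) y0, d⟫_ℝ ≤ (C0 * h) * ‖d‖ := by
        calc ⟪Fgrad t y0 - Fgrad (t + h) y0, d⟫_ℝ
            ≤ ‖Fgrad t y0 - Fgrad (t + h) y0‖ * ‖d‖ := real_inner_le_norm _ _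
          _ ≤ (C0 * h) * ‖d‖ := by
              apply mul_le_mul_of_nonneg_right _ (norm_nonneg d)
              rw [norm_sub_rev]
              have := hFt y0 t (t + h) (by linarith)
              calc ‖Fgrad (t + h) y0 - Fgrad t y0‖ ≤ C0 * (t + h - t) := this
                _ = C0 * h := by ring
      linarith
    -- first order Taylor in time
    have hr1 : ‖Fgrad (t + h) y0 - Fgrad t y0 - h • g0‖ ≤ C3 * h ^ 2 / 2 := by
      have := quadBound (f := fun s => Fgrad s y0) (f' := fun s => Gt s y0)
        (fun s => ht s y0) (a := t) (b := t + h) (by linarith) g0 hC3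
        (fun s hs => by
          have := hGtT y0 t s hs.1
          calc ‖Gt s y0 - g0‖ = ‖Gt s y0 - Gt t y0‖ := by rw [hg0]
            _ ≤ C3 * (s - t) := this)
      have he : t + h - t = h := by ring
      rw [he] at this
      exact this
    -- second order expansion in space
    have hr2 : ‖Fgrad (t + h) y1 - Fgrad (t + h) y0 - Hess (t + h) y0 d‖
        ≤ C1 * ‖d‖ ^ 2 / 2 := by
      have hline : ∀ τ : ℝ, HasDerivAt (fun τ : ℝ => y0 + τ • d) d τ := by
        intro τ
        simpa using ((hasDerivAt_id τ).smul_const d).const_add y0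
      have hφ : ∀ τ : ℝ, HasDerivAt (fun τ : ℝ => Fgrad (t + h) (y0 + τ • d))
          (Hess (t + h) (y0 + τ • d) d) τ := by
        intro τ
        exact (hhess (t + h) (y0 + τ • d)).comp_hasDerivAt τ (hline τ)
      have hKnn : 0 ≤ C1 * ‖d‖ ^ 2 := by positivity
      have := quadBound hφ (a := (0:ℝ)) (b := 1) (by norm_num) (Hess (t + h) y0 d) hKnn
        (fun τ hτ => by
          have h1 : ‖Hess (t + h) (y0 + τ • d) d - Hess (t + h) y0 d‖
              ≤ ‖Hess (t + h) (y0 + τ • d) - Hess (t + h) y0‖ * ‖d‖ := by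
            rw [← ContinuousLinearMap.sub_apply]
            exact ContinuousLinearMap.le_opNorm _ _
          have h2 : ‖Hess (t + h) (y0 + τ • d) - Hess (t + h) y0‖
              ≤ C1 * (τ * ‖d‖) := by
            have := hC1b (t + h) (y0 + τ • d) y0
            have he : y0 + τ • d - y0 = τ • d := by abel
            rw [he] at this
            rw [norm_smul, Real.norm_eq_abs, abs_of_nonneg hτ.1] at this
            exact this
          calc ‖Hess (t + h) (y0 + τ • d) d - Hess (t + h) y0 d‖
              ≤ (C1 * (τ * ‖d‖)) * ‖d‖ :=
                h1.trans (mul_le_mul_of_nonneg_right h2 (norm_nonneg d))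
            _ = C1 * ‖d‖ ^ 2 * (τ - 0) := by ring)
      have he0 : y0 + (0:ℝ) • d = y0 := by simp
      have he1 : y0 + (1:ℝ) • d = y1 := by rw [one_smul, hdd]; abel
      rw [he0, he1] at this
      simpa using this
    -- time Lipschitz bound for the Hessian
    have hS10 : ∀ v : E n, ‖(Hess (t + h) y0 - Hess t y0) v‖ ≤ C2 * h * ‖v‖ := by
      have hfd : HasFDerivAt (fun z => Fgrad (t + h) z - Fgrad t z)
          (Hess (t + h) y0 - Hess t y0) y0 := (hhess (t + h) y0).sub (hhess t y0)
      have hlip : LipschitzWith (Real.toNNReal (C2 * h))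
          (fun z => Fgrad (t + h) z - Fgrad t z) := by
        apply LipschitzWith.of_dist_le_mul
        intro a b
        rw [dist_eq_norm, dist_eq_norm]
        have hmv := mvtBound (f := fun s => Fgrad s a - Fgrad s b)
          (f' := fun s => Gt s a - Gt s b)
          (fun s => (ht s a).sub (ht s b)) (a := t) (b := t + h) (by linarith)
          (fun s _ => hC2b s a b)
        have he : (Fgrad (t + h) a - Fgrad (t + h) b) - (Fgrad t a - Fgrad t b)
            = (Fgrad (t + h) a - Fgrad t a) - (Fgrad (t + h) b - Fgrad t b) := by abel
        rw [he] at hmv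
        rw [Real.coe_toNNReal _ (by positivity)]
        calc ‖(Fgrad (t + h) a - Fgrad t a) - (Fgrad (t + h) b - Fgrad t b)‖
            ≤ C2 * ‖a - b‖ * (t + h - t) := hmv
          _ = C2 * h * ‖a - b‖ := by ring
      have hop : ‖Hess (t + h) y0 - Hess t y0‖ ≤ C2 * h := by
        have := hfd.le_of_lipschitz hlip
        rwa [Real.coe_toNNReal _ (by positivity)] at this
      intro v
      calc ‖(Hess (t + h) y0 - Hess t y0) v‖
          ≤ ‖Hess (t + h) y0 - Hess t y0‖ * ‖v‖ := ContinuousLinearMap.le_opNorm _ _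
        _ ≤ C2 * h * ‖v‖ := mul_le_mul_of_nonneg_right hop (norm_nonneg v)
    -- key algebraic identity
    have hkey : Hess (t + h) y0 (d + h • P0)
        = -(Fgrad (t + h) y0 - Fgrad t y0 - h • g0)
          - (Fgrad (t + h) y1 - Fgrad (t + h) y0 - Hess (t + h) y0 d)
          + h • ((Hess (t + h) y0 - Hess t y0) P0) := by
      have h1 : Hess (t + h) y0 (d + h • P0)
          = Hess (t + h) y0 d + h • (Hess (t + h) y0 P0) := by
        rw [map_add, map_smul]
      have h2 : (Hess (t + h) y0 - Hess t y0) P0 = Hess (t + h) y0 P0 - g0 := by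
        rw [ContinuousLinearMap.sub_apply, hP0, hP t y0, hg0]
      rw [h1, h2, hz0, hz1]
      rw [smul_sub]
      abel
    -- conclude
    have hbnd : m * ‖d + h • P0‖ ^ 2
        ≤ (C3 * h ^ 2 / 2 + C1 * (C0 * h / m) ^ 2 / 2 + h * (C2 * h * (C0 / m)))
          * ‖d + h • P0‖ := by
      have hr2' : ‖Fgrad (t + h) y1 - Fgrad (t + h) y0 - Hess (t + h) y0 d‖
          ≤ C1 * (C0 * h / m) ^ 2 / 2 := by
        refine hr2.trans ?_
        have : ‖d‖ ^ 2 ≤ (C0 * h / m) ^ 2 :=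
          pow_le_pow_left₀ (norm_nonneg d) hdle 2
        have hC1' : 0 ≤ C1 := hC1
        nlinarith
      have hlast : ‖h • ((Hess (t + h) y0 - Hess t y0) P0)‖
          ≤ h * (C2 * h * (C0 / m)) := by
        rw [norm_smul, Real.norm_eq_abs, abs_of_pos hh]
        apply mul_le_mul_of_nonneg_left _ hh.le
        calc ‖(Hess (t + h) y0 - Hess t y0) P0‖ ≤ C2 * h * ‖P0‖ := hS10 P0
          _ ≤ C2 * h * (C0 / m) :=
            mul_le_mul_of_nonneg_left (hPb t y0) (by positivity)
      calc m * ‖d + h • P0‖ ^ 2 ≤ ⟪Hess (t + h) y0 (d + h • P0), d + h • P0⟫_ℝ :=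
          hstrong (t + h) y0 _
        _ ≤ ‖Hess (t + h) y0 (d + h • P0)‖ * ‖d + h • P0‖ := real_inner_le_norm _ _
        _ ≤ (C3 * h ^ 2 / 2 + C1 * (C0 * h / m) ^ 2 / 2 + h * (C2 * h * (C0 / m)))
            * ‖d + h • P0‖ := by
          apply mul_le_mul_of_nonneg_right _ (norm_nonneg _)
          rw [hkey]
          calc ‖-(Fgrad (t + h) y0 - Fgrad t y0 - h • g0)
              - (Fgrad (t + h) y1 - Fgrad (t + h) y0 - Hess (t + h) y0 d)
              + h • ((Hess (t + h) y0 - Hess t y0) P0)‖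
              ≤ ‖-(Fgrad (t + h) y0 - Fgrad t y0 - h • g0)
                - (Fgrad (t + h) y1 - Fgrad (t + h) y0 - Hess (t + h) y0 d)‖
                + ‖h • ((Hess (t + h) y0 - Hess t y0) P0)‖ := norm_add_le _ _
            _ ≤ (‖Fgrad (t + h) y0 - Fgrad t y0 - h • g0‖
                + ‖Fgrad (t + h) y1 - Fgrad (t + h) y0 - Hess (t + h) y0 d‖)
                + ‖h • ((Hess (t + h) y0 - Hess t y0) P0)‖ := by
                apply add_le_add_left
                calc ‖-(Fgrad (t + h) y0 - Fgrad t y0 - h • g0)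
                    - (Fgrad (t + h) y1 - Fgrad (t + h) y0 - Hess (t + h) y0 d)‖
                    ≤ ‖-(Fgrad (t + h) y0 - Fgrad t y0 - h • g0)‖
                      + ‖Fgrad (t + h) y1 - Fgrad (t + h) y0 - Hess (t + h) y0 d‖ :=
                      norm_sub_le _ _
                  _ = ‖Fgrad (t + h) y0 - Fgrad t y0 - h • g0‖
                      + ‖Fgrad (t + h) y1 - Fgrad (t + h) y0 - Hess (t + h) y0 d‖ := by
                      rw [norm_neg]
            _ ≤ (C3 * h ^ 2 / 2 + C1 * (C0 * h / m) ^ 2 / 2) + h * (C2 * h * (C0 / m)) :=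
                add_le_add (add_le_add hr1 hr2') hlast
            _ = C3 * h ^ 2 / 2 + C1 * (C0 * h / m) ^ 2 / 2 + h * (C2 * h * (C0 / m)) := by
                ring
    have hfin := div_trick hm (by positivity) (norm_nonneg _) hbnd
    have heq : ystar (t + h) - (ystar t - h • P t (ystar t)) = d + h • P0 := by
      rw [hdd, hy1, hy0, hP0]
      abel
    have heq2 : (C3 * h ^ 2 / 2 + C1 * (C0 * h / m) ^ 2 / 2 + h * (C2 * h * (C0 / m))) / m
        = h ^ 2 * (C0 ^ 2 * C1 / (2 * m ^ 3) + C0 * C2 / m ^ 2 + C3 / (2 * m)) := by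
      field_simp
      ring
    rw [heq]
    refine hfin.trans ?_
    rw [heq2, hΔ]
  -- per step estimate
  have hstep : ∀ k : ℕ, 1 ≤ k →
      ‖y (k + 1) - ystar (tk (k + 1))‖
        ≤ ρ * σ * ‖y k - ystar (tk k)‖
          + ρ * (h * C0 * ε / m + h ^ 2 * Δ + h ^ 2 * C3 * Hbar / 2) := by
    intro k hk
    set t := tk k with htdef
    have ht1 : tk (k + 1) = t + h := by
      rw [htdef, htk, htk]
      push_cast
      ring
    have ht0 : tk (k - 1) = t - h := by
      rw [htdef, htk, htk]
      rw [Nat.cast_sub hk]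
      push_cast
      ring
    set x := y k with hx
    -- backward difference error
    have he1 : ‖Fgrad t x - Fgrad (t - h) x - h • Gt t x‖ ≤ C3 * h ^ 2 / 2 := by
      have := quadBound' (f := fun s => Fgrad s x) (f' := fun s => Gt s x)
        (fun s => ht s x) (a := t - h) (b := t) (by linarith) (Gt t x) hC3
        (fun s hs => by
          have := hGtT x s t hs.2
          rw [norm_sub_rev]
          exact this)
      have heq : t - (t - h) = h := by ring
      rw [heq] at this
      exact this
    -- prediction vs ideal prediction
    have hHg : ‖P t x - H k (Gt t x)‖ ≤ ε * C0 / m := by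
      apply div_trick hm (mul_nonneg hε hC0) (norm_nonneg _)
      set u := P t x - H k (Gt t x) with hu
      have hkeyu : Hess t x u
          = (ContinuousLinearMap.id ℝ (E n) - (Hess t x).comp (H k)) (Gt t x) := by
        rw [hu, map_sub, hP t x, ContinuousLinearMap.sub_apply,
          ContinuousLinearMap.comp_apply, ContinuousLinearMap.id_apply]
      calc m * ‖u‖ ^ 2 ≤ ⟪Hess t x u, u⟫_ℝ := hstrong t x u
        _ ≤ ‖Hess t x u‖ * ‖u‖ := real_inner_le_norm _ _
        _ ≤ (ε * C0) * ‖u‖ := by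
            apply mul_le_mul_of_nonneg_right _ (norm_nonneg u)
            rw [hkeyu]
            calc ‖(ContinuousLinearMap.id ℝ (E n) - (Hess t x).comp (H k)) (Gt t x)‖
                ≤ ‖ContinuousLinearMap.id ℝ (E n) - (Hess t x).comp (H k)‖ * ‖Gt t x‖ :=
                  ContinuousLinearMap.le_opNorm _ _
              _ ≤ ε * C0 := by
                  apply mul_le_mul (hHerr k hk) (hC0b t x) (norm_nonneg _) hε
    have hsplit : ypred k - (x - h • P t x)
        = h • (P t x - H k (Gt t x)) - H k (Fgrad t x - Fgrad (t - h) x - h • Gt t x) := by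
      rw [hpred k hk, ht0, ← hx]
      have hdc : Fgrad t x - Fgrad (t - h) x
          = h • Gt t x + (Fgrad t x - Fgrad (t - h) x - h • Gt t x) := by abel
      rw [hdc, map_add, map_smul, smul_sub]
      abel
    have hpe : ‖ypred k - (x - h • P t x)‖
        ≤ h * (ε * C0 / m) + Hbar * (C3 * h ^ 2 / 2) := by
      rw [hsplit]
      calc ‖h • (P t x - H k (Gt t x)) - H k (Fgrad t x - Fgrad (t - h) x - h • Gt t x)‖
          ≤ ‖h • (P t x - H k (Gt t x))‖
            + ‖H k (Fgrad t x - Fgrad (t - h) x - h • Gt t x)‖ := norm_sub_le _ _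
        _ ≤ h * (ε * C0 / m) + Hbar * (C3 * h ^ 2 / 2) := by
            apply add_le_add
            · rw [norm_smul, Real.norm_eq_abs, abs_of_pos hh]
              exact mul_le_mul_of_nonneg_left hHg hh.le
            · calc ‖H k (Fgrad t x - Fgrad (t - h) x - h • Gt t x)‖
                  ≤ ‖H k‖ * ‖Fgrad t x - Fgrad (t - h) x - h • Gt t x‖ :=
                    ContinuousLinearMap.le_opNorm _ _
                _ ≤ Hbar * (C3 * h ^ 2 / 2) := by
                    apply mul_le_mul (hHnorm k hk) he1 (norm_nonneg _) hHbar
    -- ideal prediction Lipschitz (σ)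
    have hTlip : ‖(x - h • P t x) - (ystar t - h • P t (ystar t))‖
        ≤ σ * ‖x - ystar t‖ := by
      have h1 : (x - h • P t x) - (ystar t - h • P t (ystar t))
          = (x - ystar t) - h • (P t x - P t (ystar t)) := by
        rw [smul_sub]
        abel
      rw [h1]
      calc ‖(x - ystar t) - h • (P t x - P t (ystar t))‖
          ≤ ‖x - ystar t‖ + ‖h • (P t x - P t (ystar t))‖ := norm_sub_le _ _
        _ ≤ ‖x - ystar t‖ + h * ((C2 * ‖x - ystar t‖ + C1 * ‖x - ystar t‖ * (C0 / m)) / m) := by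
            apply add_le_add_right
            rw [norm_smul, Real.norm_eq_abs, abs_of_pos hh]
            exact mul_le_mul_of_nonneg_left (hPlip t x (ystar t)) hh.le
        _ = σ * ‖x - ystar t‖ := by
            rw [hσ]
            field_simp
            ring
    -- total prediction error
    have hpred_total : ‖ypred k - ystar (t + h)‖
        ≤ σ * ‖x - ystar t‖
          + (h * C0 * ε / m + h ^ 2 * Δ + h ^ 2 * C3 * Hbar / 2) := by
      calc ‖ypred k - ystar (t + h)‖
          ≤ ‖ypred k - (x - h • P t x)‖
            + ‖(x - h • P t x) - (ystar t - h • P t (ystar t))‖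
            + ‖(ystar t - h • P t (ystar t)) - ystar (t + h)‖ := by
            have := norm_sub_le_norm_sub_add_norm_sub (ypred k) (x - h • P t x) (ystar (t + h))
            have h2 := norm_sub_le_norm_sub_add_norm_sub (x - h • P t x)
              (ystar t - h • P t (ystar t)) (ystar (t + h))
            linarith
        _ ≤ (h * (ε * C0 / m) + Hbar * (C3 * h ^ 2 / 2)) + σ * ‖x - ystar t‖
            + h ^ 2 * Δ := by
            apply add_le_add (add_le_add hpe hTlip)
            rw [norm_sub_rev]
            exact htrack t
        _ = σ * ‖x - ystar t‖ + (h * C0 * ε / m + h ^ 2 * Δ + h ^ 2 * C3 * Hbar / 2) := by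
            ring
    -- correction step
    have hfix : ystar (t + h) - γ • Fgrad (t + h) (ystar (t + h)) = ystar (t + h) := by
      rw [hstar0 (t + h), smul_zero, sub_zero]
    have hcor : ‖y (k + 1) - ystar (tk (k + 1))‖ ≤ ρ * ‖ypred k - ystar (t + h)‖ := by
      rw [hcorr k hk, ht1]
      calc ‖(ypred k - γ • Fgrad (t + h) (ypred k)) - ystar (t + h)‖
          = ‖(ypred k - γ • Fgrad (t + h) (ypred k))
            - (ystar (t + h) - γ • Fgrad (t + h) (ystar (t + h)))‖ := by rw [hfix]
        _ ≤ ρ * ‖ypred k - ystar (t + h)‖ := hcontr (t + h) (ypred k) (ystar (t + h))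
    calc ‖y (k + 1) - ystar (tk (k + 1))‖ ≤ ρ * ‖ypred k - ystar (t + h)‖ := hcor
      _ ≤ ρ * (σ * ‖x - ystar t‖
          + (h * C0 * ε / m + h ^ 2 * Δ + h ^ 2 * C3 * Hbar / 2)) :=
          mul_le_mul_of_nonneg_left hpred_total hρ0
      _ = ρ * σ * ‖y k - ystar (tk k)‖
          + ρ * (h * C0 * ε / m + h ^ 2 * Δ + h ^ 2 * C3 * Hbar / 2) := by
          rw [← hx, ← htdef]
          ring
  -- geometric recursion
  have hrec : ∀ k : ℕ, 1 ≤ k → ‖y k - ystar (tk k)‖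
      ≤ (ρ * σ) ^ (k - 1) * ‖y 1 - ystar (tk 1)‖
        + ρ * (h * C0 * ε / m + h ^ 2 * Δ + h ^ 2 * C3 * Hbar / 2)
          * (1 - (ρ * σ) ^ (k - 1)) / (1 - ρ * σ) := by
    intro k hk
    induction k, hk using Nat.le_induction with
    | base =>
      simp
    | succ n hn ih =>
      have hsucc : n + 1 - 1 = n := by omega
      have hpred1 : n - 1 + 1 = n := Nat.succ_pred_eq_of_pos hn
      have hqq : (ρ * σ) * (ρ * σ) ^ (n - 1) = (ρ * σ) ^ n := by
        rw [← pow_succ']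
        rw [hpred1]
      set B := ρ * (h * C0 * ε / m + h ^ 2 * Δ + h ^ 2 * C3 * Hbar / 2) with hB
      have hB0 : 0 ≤ B := mul_nonneg hρ0 herr0
      calc ‖y (n + 1) - ystar (tk (n + 1))‖
          ≤ ρ * σ * ‖y n - ystar (tk n)‖ + B := hstep n hn
        _ ≤ ρ * σ * ((ρ * σ) ^ (n - 1) * ‖y 1 - ystar (tk 1)‖
            + B * (1 - (ρ * σ) ^ (n - 1)) / (1 - ρ * σ)) + B := by
            apply add_le_add_left
            exact mul_le_mul_of_nonneg_left ih hq0
        _ = (ρ * σ) ^ (n + 1 - 1) * ‖y 1 - ystar (tk 1)‖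
            + B * (1 - (ρ * σ) ^ (n + 1 - 1)) / (1 - ρ * σ) := by
            rw [hsucc]
            have hne : (1 : ℝ) - ρ * σ ≠ 0 := ne_of_gt h1q
            rw [← hqq]
            field_simp
            ring
  refine ⟨hrec, ?_⟩
  -- limsup part
  set B := ρ * (h * C0 * ε / m + h ^ 2 * Δ + h ^ 2 * C3 * Hbar / 2) with hB
  have hB0 : 0 ≤ B := mul_nonneg hρ0 herr0
  have hb2 : ∀ k : ℕ, 1 ≤ k → ‖y k - ystar (tk k)‖
      ≤ (ρ * σ) ^ (k - 1) * ‖y 1 - ystar (tk 1)‖ + B / (1 - ρ * σ) := by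
    intro k hk
    refine (hrec k hk).trans ?_
    apply add_le_add_right
    rw [div_le_div_iff₀ h1q h1q]
    have hp0 : 0 ≤ (ρ * σ) ^ (k - 1) := pow_nonneg hq0 _
    nlinarith [mul_nonneg (mul_nonneg hB0 h1q.le) hp0]
  have htend : Filter.Tendsto
      (fun k : ℕ => (ρ * σ) ^ (k - 1) * ‖y 1 - ystar (tk 1)‖ + B / (1 - ρ * σ))
      Filter.atTop (nhds (0 * ‖y 1 - ystar (tk 1)‖ + B / (1 - ρ * σ))) := by
    apply Filter.Tendsto.add_const
    apply Filter.Tendsto.mul_const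
    exact (tendsto_pow_atTop_nhds_zero_of_lt_one hq0 hq1).comp (Filter.tendsto_sub_atTop_nat 1)
  have hlim : Filter.limsup (fun k => ‖y k - ystar (tk k)‖) Filter.atTop
      ≤ 0 * ‖y 1 - ystar (tk 1)‖ + B / (1 - ρ * σ) := by
    refine le_trans (Filter.limsup_le_limsup ?_ ?_ ?_) (le_of_eq htend.limsup_eq)
    · filter_upwards [Filter.eventually_ge_atTop 1] with k hk
      exact hb2 k hk
    · exact Filter.isCoboundedUnder_le_of_le Filter.atTop (fun k => norm_nonneg _)
    · exact htend.isBoundedUnder_le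
  rw [hB] at hlim
  calc Filter.limsup (fun k => ‖y k - ystar (tk k)‖) Filter.atTop
      ≤ 0 * ‖y 1 - ystar (tk 1)‖
        + ρ * (h * C0 * ε / m + h ^ 2 * Δ + h ^ 2 * C3 * Hbar / 2) / (1 - ρ * σ) := hlim
    _ = ρ / (1 - ρ * σ) * (h * C0 * ε / m + h ^ 2 * Δ + h ^ 2 * C3 * Hbar / 2) := by
        ring
end
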